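/- arXiv:2107.11780 — 2 statements merged into one kernel-verified Lean document; each statement's English description precedes it below -/
import Mathlib

section
/- Let k ≥ 1 be an integer and let G be a finite graph with no stable (independent) set of size k. If ω(G) > 1, then the number of vertices of G is strictly less than ω(G)^k, where ω(G) denotes the clique number of G. -/
open SimpleGraph Finset

universe u

/-- A "stable set" predicate: pairwise non-adjacent. -/
def Stab {V : Type u} (G : SimpleGraph V) (s : Finset V) : Prop :=
  ∀ a ∈ s, ∀ b ∈ s, a ≠ b → ¬ G.Adj a b

lemma stab_iff {V : Type u} (G : SimpleGraph V) (s : Finset V) :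
    Gᶜ.IsClique (s : Set V) ↔ Stab G s := by
  constructor
  · intro h a ha b hb hab
    exact ((compl_adj G a b).mp (h (Finset.mem_coe.mpr ha) (Finset.mem_coe.mpr hb) hab)).2
  · intro h a ha b hb hab
    exact (compl_adj G a b).mpr ⟨hab, h a (Finset.mem_coe.mp ha) b (Finset.mem_coe.mp hb) hab⟩

lemma stab_lift {V : Type u} [DecidableEq V] {G : SimpleGraph V} {S : Set V} {t : Finset ↥S}
    (h : Stab (G.induce S) t) : Stab G (t.image Subtype.val) := by
  intro a ha b hb hab hadj
  obtain ⟨a', ha', rfl⟩ := Finset.mem_image.mp ha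
  obtain ⟨b', hb', rfl⟩ := Finset.mem_image.mp hb
  have hne : a' ≠ b' := fun e => hab (by rw [e])
  exact h a' ha' b' hb' hne (by simpa using hadj)

lemma cliqueNum_induce_le {V : Type u} [Fintype V] (G : SimpleGraph V) (S : Set V) :
    (G.induce S).cliqueNum ≤ G.cliqueNum := by
  classical
  haveI : Fintype ↥S := Fintype.ofFinite _
  obtain ⟨s, hs⟩ := (G.induce S).exists_isNClique_cliqueNum
  have hc : G.IsClique ((s.image Subtype.val : Finset V) : Set V) := by
    intro a ha b hb hab
    obtain ⟨a', ha', rfl⟩ := Finset.mem_image.mp ha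
    obtain ⟨b', hb', rfl⟩ := Finset.mem_image.mp hb
    have hne : a' ≠ b' := fun e => hab (by rw [e])
    simpa using hs.isClique ha' hb' hne
  have hle := SimpleGraph.IsClique.card_le_cliqueNum (tc := hc)
  rwa [Finset.card_image_of_injective _ Subtype.val_injective, hs.card_eq] at hle

lemma key (n : ℕ) : ∀ {V : Type u} [Fintype V] (G : SimpleGraph V), Fintype.card V = n →
    ∀ k : ℕ, (∀ s : Finset V, s.card = k → ¬ Stab G s) →
    Fintype.card V < (max G.cliqueNum 2) ^ k := by
  induction n using Nat.strong_induction_on with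
  | _ n IH =>
    intro V _ G hn k hst
    classical
    match k with
    | 0 =>
      exact absurd (fun a ha => absurd ha (by simp)) (hst ∅ rfl)
    | (k+1) =>
      by_cases hV : IsEmpty V
      · have h0 : Fintype.card V = 0 := Fintype.card_eq_zero
        have : 0 < (max G.cliqueNum 2) ^ (k+1) :=
          pow_pos (lt_of_lt_of_le two_pos (le_max_right _ _)) _
        omega
      obtain ⟨v⟩ := not_isEmpty_iff.mp hV
      set N : Set V := {u | G.Adj v u} with hNdef
      set M : Set V := {u | u ≠ v ∧ ¬ G.Adj v u} with hMdef
      haveI : Fintype ↥N := Fintype.ofFinite _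
      haveI : Fintype ↥M := Fintype.ofFinite _
      -- covering
      have hcov : (Finset.univ : Finset V) ⊆ insert v (N.toFinset ∪ M.toFinset) := by
        intro u _
        by_cases h1 : u = v
        · simp [h1]
        by_cases h2 : G.Adj v u
        · simp [Finset.mem_insert, Finset.mem_union, Set.mem_toFinset, hNdef, h2]
        · simp [Finset.mem_insert, Finset.mem_union, Set.mem_toFinset, hMdef, h1, h2]
      have hcard : Fintype.card V ≤ 1 + Fintype.card ↥N + Fintype.card ↥M := by
        have h1 := Finset.card_le_card hcov
        have h2 := Finset.card_insert_le v (N.toFinset ∪ M.toFinset)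
        have h3 := Finset.card_union_le N.toFinset M.toFinset
        rw [Finset.card_univ] at h1
        rw [Set.toFinset_card, Set.toFinset_card] at h3
        omega
      -- M part: no stable k-set in G.induce M
      have hvM : v ∉ M := by simp [hMdef]
      have hMlt : Fintype.card ↥M < n := by
        rw [← hn]
        exact Fintype.card_lt_of_injective_of_notMem Subtype.val Subtype.val_injective
          (by rwa [Subtype.range_coe])
      have hstM : ∀ t : Finset ↥M, t.card = k → ¬ Stab (G.induce M) t := by
        intro t ht hStab
        have himg : (t.image Subtype.val).card = k := by
          rw [Finset.card_image_of_injective _ Subtype.val_injective, ht]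
        have hvimg : v ∉ t.image Subtype.val := by
          intro hmem
          obtain ⟨a', _, ha'⟩ := Finset.mem_image.mp hmem
          exact hvM (ha' ▸ a'.2)
        refine hst (insert v (t.image Subtype.val)) ?_ ?_
        · rw [Finset.card_insert_of_notMem hvimg, himg]
        · intro a ha b hb hab hadj
          have hbase := stab_lift hStab
          rcases Finset.mem_insert.mp ha with rfl | ha'
          · rcases Finset.mem_insert.mp hb with rfl | hb'
            · exact hab rfl
            · obtain ⟨b', hb'', rfl⟩ := Finset.mem_image.mp hb'
              exact b'.2.2 hadj
          · rcases Finset.mem_insert.mp hb with rfl | hb'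
            · obtain ⟨a', ha'', rfl⟩ := Finset.mem_image.mp ha'
              exact a'.2.2 hadj.symm
            · exact hbase a ha' b hb' hab hadj
      have hMbound : Fintype.card ↥M < (max (G.induce M).cliqueNum 2) ^ k :=
        IH _ hMlt (G.induce M) rfl k hstM
      have hMw : max (G.induce M).cliqueNum 2 ≤ max G.cliqueNum 2 :=
        max_le (le_max_of_le_left (cliqueNum_induce_le G M)) (le_max_right _ _)
      have hMfinal : Fintype.card ↥M < (max G.cliqueNum 2) ^ k :=
        lt_of_lt_of_le hMbound (Nat.pow_le_pow_left hMw k)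
      have hpow : (max G.cliqueNum 2) ^ (k+1) = (max G.cliqueNum 2) ^ k * (max G.cliqueNum 2) :=
        pow_succ _ _
      by_cases hw : 3 ≤ G.cliqueNum
      · -- N part via induction at k+1
        have hvN : v ∉ N := by simp [hNdef]
        have hNlt : Fintype.card ↥N < n := by
          rw [← hn]
          exact Fintype.card_lt_of_injective_of_notMem Subtype.val Subtype.val_injective
            (by rwa [Subtype.range_coe])
        have hstN : ∀ t : Finset ↥N, t.card = k + 1 → ¬ Stab (G.induce N) t := by
          intro t ht hStab
          refine hst (t.image Subtype.val) ?_ (stab_lift hStab)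
          rw [Finset.card_image_of_injective _ Subtype.val_injective, ht]
        have hNbound : Fintype.card ↥N < (max (G.induce N).cliqueNum 2) ^ (k+1) :=
          IH _ hNlt (G.induce N) rfl (k+1) hstN
        -- clique number of N is < clique number of G
        have hNsucc : (G.induce N).cliqueNum + 1 ≤ G.cliqueNum := by
          obtain ⟨s, hs⟩ := (G.induce N).exists_isNClique_cliqueNum
          have hvimg : v ∉ s.image Subtype.val := by
            intro hmem
            obtain ⟨a', _, ha'⟩ := Finset.mem_image.mp hmem
            exact hvN (ha' ▸ a'.2)
          have hc : G.IsClique ((insert v (s.image Subtype.val) : Finset V) : Set V) := by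
            intro a ha b hb hab
            simp only [Finset.coe_insert, Set.mem_insert_iff, Finset.mem_coe] at ha hb
            rcases ha with rfl | ha'
            · rcases hb with rfl | hb'
              · exact absurd rfl hab
              · obtain ⟨b', hb'', rfl⟩ := Finset.mem_image.mp hb'
                exact b'.2
            · rcases hb with rfl | hb'
              · obtain ⟨a', ha'', rfl⟩ := Finset.mem_image.mp ha'
                exact a'.2.symm
              · obtain ⟨a', ha'', rfl⟩ := Finset.mem_image.mp ha'
                obtain ⟨b', hb'', rfl⟩ := Finset.mem_image.mp hb'
                have hne : a' ≠ b' := fun e => hab (by rw [e])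
                simpa using hs.isClique ha'' hb'' hne
          have hle := SimpleGraph.IsClique.card_le_cliqueNum (tc := hc)
          rw [Finset.card_insert_of_notMem hvimg,
            Finset.card_image_of_injective _ Subtype.val_injective, hs.card_eq] at hle
          omega
        have hNw : max (G.induce N).cliqueNum 2 ≤ G.cliqueNum - 1 :=
          max_le (by omega) (by omega)
        have hNfinal : Fintype.card ↥N < (G.cliqueNum - 1) ^ (k+1) :=
          lt_of_lt_of_le hNbound (Nat.pow_le_pow_left hNw (k+1))
        have hmax : max G.cliqueNum 2 = G.cliqueNum := max_eq_left (by omega)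
        rw [hmax] at hMfinal ⊢
        -- arithmetic: (w-1)^(k+1) + w^k ≤ w^(k+1)
        have harith : (G.cliqueNum - 1) ^ (k+1) + G.cliqueNum ^ k ≤ G.cliqueNum ^ (k+1) := by
          obtain ⟨m, hm⟩ : ∃ m, G.cliqueNum = m + 1 := ⟨G.cliqueNum - 1, by omega⟩
          rw [hm]
          simp only [Nat.add_sub_cancel]
          have h1 : m ^ (k+1) = m ^ k * m := pow_succ m k
          have h2 : (m+1) ^ (k+1) = (m+1) ^ k * m + (m+1) ^ k := by ring
          have h3 : m ^ k ≤ (m+1) ^ k := Nat.pow_le_pow_left (by omega) k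
          have h4 : m ^ k * m ≤ (m+1) ^ k * m := Nat.mul_le_mul_right m h3
          omega
        have e1 : Fintype.card ↥N < (G.cliqueNum - 1) ^ (k+1) := hNfinal
        have e2 : Fintype.card ↥M < G.cliqueNum ^ k := hMfinal
        omega
      · -- small clique number: neighbors of v are pairwise non-adjacent
        have hNstab : ∀ a ∈ N.toFinset, ∀ b ∈ N.toFinset, a ≠ b → ¬ G.Adj a b := by
          intro a ha b hb hab hadj
          rw [Set.mem_toFinset] at ha hb
          have h3 : G.IsNClique 3 {v, a, b} := is3Clique_triple_iff.mpr ⟨ha, hb, hadj⟩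
          have hle := SimpleGraph.IsClique.card_le_cliqueNum (tc := h3.isClique)
          rw [h3.card_eq] at hle
          omega
        have hNk : N.toFinset.card ≤ k := by
          by_contra hgt
          obtain ⟨t, hts, htc⟩ := Finset.exists_subset_card_eq
            (show k + 1 ≤ N.toFinset.card by omega)
          exact hst t htc fun a ha b hb hab => hNstab a (hts ha) b (hts hb) hab
        have hmax : max G.cliqueNum 2 = 2 := max_eq_right (by omega)
        rw [hmax] at hMfinal ⊢
        have hk2 : k < 2 ^ k := Nat.lt_two_pow_self (n := k)
        have hNcard : Fintype.card ↥N ≤ k := by rwa [← Set.toFinset_card]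
        have h2p : (2:ℕ) ^ (k+1) = 2 ^ k + 2 ^ k := by ring
        omega

theorem stmt_1 {V : Type*} [Fintype V] (G : SimpleGraph V) (k : ℕ) (hk : 1 ≤ k)
    (hstab : ¬ ∃ s : Finset V, s.card = k ∧ Gᶜ.IsClique (s : Set V))
    (hω : 1 < G.cliqueNum) :
    Fintype.card V < G.cliqueNum ^ k := by
  have hst : ∀ s : Finset V, s.card = k → ¬ Stab G s := by
    intro s hs hSt
    exact hstab ⟨s, hs, (stab_iff G s).mpr hSt⟩
  have h := key (Fintype.card V) G rfl k hst
  rwa [max_eq_left (by omega)] at h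
end

section
/- Let k ≥ 1 be an integer and let G be a nonempty finite graph containing no induced star K_{1,k} (i.e., G is K_{1,k}-free). Then χ(G) ≤ ω(G)^{k}. -/
open SimpleGraph

/-- `G` has no induced subgraph isomorphic to `H`. -/
def IsInducedSubgraphFree {W V : Type*} (H : SimpleGraph W) (G : SimpleGraph V) : Prop :=
  ¬ ∃ s : Set V, Nonempty (H ≃g G.induce s)

private lemma choose_le_pow_aux (y : ℕ) : ∀ x : ℕ, (x + y).choose y ≤ (x + 1) ^ y := by
  induction y with
  | zero => simp
  | succ y ihy =>
    intro x
    induction x with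
    | zero => simp
    | succ x ihx =>
      have h1 := ihy (x + 1)
      have hp : (x + 1 + (y + 1)).choose (y + 1)
          = (x + 1 + y).choose y + (x + (y + 1)).choose (y + 1) := by
        rw [show x + 1 + (y + 1) = (x + y + 1) + 1 by ring, Nat.choose_succ_succ']
        congr 2 <;> ring
      rw [hp]
      have hx2 : x + 1 + 1 = x + 2 := by ring
      rw [hx2] at h1 ⊢
      have h2 : (x + (y + 1)).choose (y + 1) ≤ (x + 1) ^ (y + 1) := ihx
      have h3 : (x + 1) ^ (y + 1) ≤ (x + 2) ^ y * (x + 1) := by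
        rw [pow_succ]
        exact Nat.mul_le_mul_right _ (Nat.pow_le_pow_left (by omega) y)
      have h4 : (x + 2) ^ (y + 1) = (x + 2) ^ y + (x + 2) ^ y * (x + 1) := by
        rw [pow_succ]; ring
      omega

private lemma compl_induce {W : Type*} (H : SimpleGraph W) (s : Set W) :
    (H.induce s)ᶜ = Hᶜ.induce s := by
  ext x y
  constructor
  · rintro ⟨h1, h2⟩
    exact ⟨fun h => h1 (Subtype.ext h), h2⟩
  · rintro ⟨h1, h2⟩
    exact ⟨fun h => h1 (congrArg Subtype.val h), h2⟩

private lemma cliqueFree_one_isEmpty {W : Type*} (H : SimpleGraph W) (h : H.CliqueFree 1) :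
    IsEmpty W := by
  constructor
  intro w
  refine h {w} ⟨?_, Finset.card_singleton w⟩
  rw [Finset.coe_singleton]
  exact Set.pairwise_singleton w H.Adj

private lemma neighborhood_cliqueFree {W : Type*} (H : SimpleGraph W) (v : W) (n : ℕ)
    (h : H.CliqueFree (n + 1)) : (H.induce (H.neighborSet v)).CliqueFree n := by
  classical
  intro t ht
  set f : ↥(H.neighborSet v) ↪ W := ⟨Subtype.val, Subtype.val_injective⟩ with hf
  have hc : H.IsClique (↑(t.map f)) := by
    rw [Finset.coe_map]
    rintro x hx y hy hxy
    obtain ⟨a, ha, rfl⟩ := hx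
    obtain ⟨b, hb, rfl⟩ := hy
    exact ht.isClique ha hb (fun hab => hxy (congrArg _ hab))
  have hclique : H.IsNClique (n + 1) (insert v (t.map f)) := by
    refine IsNClique.insert ⟨hc, by rw [Finset.card_map, ht.card_eq]⟩ ?_
    intro b hb
    simp only [Finset.mem_map] at hb
    obtain ⟨⟨b, hbN⟩, _, rfl⟩ := hb
    exact hbN
  exact h _ hclique

private lemma ramsey_aux (n : ℕ) : ∀ (a b : ℕ), a + b ≤ n →
    ∀ {W : Type u} [Fintype W] (H : SimpleGraph W),
    H.CliqueFree (a + 1) → Hᶜ.CliqueFree (b + 1) → Nat.card W < (a + b).choose a := by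
  induction n with
  | zero =>
    intro a b hab W _ H h1 h2
    obtain ⟨rfl, rfl⟩ : a = 0 ∧ b = 0 := by omega
    have := cliqueFree_one_isEmpty H h1
    simp [Nat.card_of_isEmpty]
  | succ n ih =>
    intro a b hab W _ H h1 h2
    classical
    match a, b with
    | 0, b =>
      have := cliqueFree_one_isEmpty H h1
      have hpos : 0 < (0 + b).choose 0 := Nat.choose_pos (Nat.zero_le _)
      simpa [Nat.card_of_isEmpty] using hpos
    | a + 1, 0 =>
      have := cliqueFree_one_isEmpty Hᶜ h2
      have hpos : 0 < (a + 1 + 0).choose (a + 1) := Nat.choose_pos (by omega)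
      simpa [Nat.card_of_isEmpty] using hpos
    | a + 1, b + 1 =>
      by_cases hW : IsEmpty W
      · have hpos : 0 < (a + 1 + (b + 1)).choose (a + 1) := Nat.choose_pos (by omega)
        simpa [Nat.card_of_isEmpty] using hpos
      · rw [not_isEmpty_iff] at hW
        obtain ⟨v⟩ := hW
        set N : Set W := H.neighborSet v with hNdef
        set M : Set W := Hᶜ.neighborSet v with hMdef
        have hN1 : (H.induce N).CliqueFree (a + 1) := neighborhood_cliqueFree H v (a + 1) h1
        have hN2 : (H.induce N)ᶜ.CliqueFree (b + 1 + 1) := by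
          rw [compl_induce]
          exact h2.comap (SimpleGraph.Embedding.induce N).isContained
        have hNcard : Nat.card ↥N < (a + (b + 1)).choose a :=
          ih a (b + 1) (by omega) (H.induce N) hN1 hN2
        have hM1 : (Hᶜ.induce M).CliqueFree (b + 1) := neighborhood_cliqueFree Hᶜ v (b + 1) h2
        have hM2 : (H.induce M).CliqueFree (a + 1 + 1) :=
          h1.comap (SimpleGraph.Embedding.induce M).isContained
        have hM2' : (H.induce M)ᶜ.CliqueFree (b + 1) := by
          rw [compl_induce]; exact hM1
        have hMcard : Nat.card ↥M < (a + 1 + b).choose (a + 1) :=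
          ih (a + 1) b (by omega) (H.induce M) hM2 hM2'
        have hunion : (insert v (N ∪ M) : Set W) = Set.univ := by
          ext w
          simp only [Set.mem_insert_iff, Set.mem_union, Set.mem_univ, iff_true, hNdef, hMdef,
            mem_neighborSet, compl_adj]
          by_cases hw : w = v
          · exact Or.inl hw
          · by_cases hadj : H.Adj v w
            · exact Or.inr (Or.inl hadj)
            · exact Or.inr (Or.inr ⟨Ne.symm hw, hadj⟩)
        have hvnot : v ∉ N ∪ M := by
          simp [hNdef, hMdef]
        have hdisj : Disjoint N M := by
          rw [Set.disjoint_left]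
          intro w hwN hwM
          rw [hMdef] at hwM
          exact hwM.2 hwN
        have hcard : Nat.card W = 1 + N.ncard + M.ncard := by
          have h1' : (insert v (N ∪ M)).ncard = (N ∪ M).ncard + 1 :=
            Set.ncard_insert_of_notMem hvnot (Set.toFinite _)
          have h2' : (N ∪ M).ncard = N.ncard + M.ncard :=
            Set.ncard_union_eq hdisj (Set.toFinite _) (Set.toFinite _)
          have h3' : (insert v (N ∪ M)).ncard = Nat.card W := by
            rw [hunion, Set.ncard_univ]
          omega
        rw [Nat.card_coe_set_eq] at hNcard hMcard
        have hpascal : (a + 1 + (b + 1)).choose (a + 1)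
            = (a + b + 1).choose a + (a + b + 1).choose (a + 1) := by
          rw [show a + 1 + (b + 1) = (a + b + 1) + 1 by ring, Nat.choose_succ_succ']
        have e1 : a + (b + 1) = a + b + 1 := by ring
        have e2 : a + 1 + b = a + b + 1 := by ring
        rw [e1] at hNcard
        rw [e2] at hMcard
        omega

private lemma ramsey_bound (a b : ℕ) {W : Type u} [Fintype W] (H : SimpleGraph W)
    (h1 : H.CliqueFree (a + 1)) (h2 : Hᶜ.CliqueFree (b + 1)) :
    Nat.card W < (a + b).choose a :=
  ramsey_aux (a + b) a b le_rfl H h1 h2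

private lemma greedy_colorable {V : Type*} [Fintype V] (G : SimpleGraph V) (n : ℕ) (hn : 0 < n)
    (hdeg : ∀ v, Nat.card (G.neighborSet v) < n) : G.Colorable n := by
  classical
  suffices h : ∀ s : Finset V, ∃ f : V → Fin n, ∀ u ∈ s, ∀ w ∈ s, G.Adj u w → f u ≠ f w by
    obtain ⟨f, hf⟩ := h Finset.univ
    exact ⟨Coloring.mk f fun {u w} hadj =>
      hf u (Finset.mem_univ u) w (Finset.mem_univ w) hadj⟩
  intro s
  induction s using Finset.induction_on with
  | empty => exact ⟨fun _ => ⟨0, hn⟩, by simp⟩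
  | @insert a s ha ih =>
    obtain ⟨f, hf⟩ := ih
    set T : Finset (Fin n) := (G.neighborSet a).toFinset.image f with hT
    have hTcard : T.card < n := by
      calc T.card ≤ (G.neighborSet a).toFinset.card := Finset.card_image_le
        _ = Nat.card (G.neighborSet a) := by
            rw [Set.toFinset_card, Nat.card_eq_fintype_card]
        _ < n := hdeg a
    have hcex : ∃ c : Fin n, c ∉ T := by
      by_contra hcon
      push_neg at hcon
      have hsub : (Finset.univ : Finset (Fin n)) ⊆ T := fun x _ => hcon x
      have := Finset.card_le_card hsub
      rw [Finset.card_univ, Fintype.card_fin] at this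
      omega
    obtain ⟨c, hc⟩ := hcex
    refine ⟨Function.update f a c, ?_⟩
    intro u hu w hw hadj
    rcases Finset.mem_insert.1 hu with hua | hu' <;> rcases Finset.mem_insert.1 hw with hwa | hw'
    · exact absurd hadj (by rw [hua, hwa]; exact G.irrefl)
    · have hwa : w ≠ a := fun h => ha (h ▸ hw')
      have hadj' : G.Adj a w := by rwa [hua] at hadj
      rw [hua, Function.update_self, Function.update_of_ne hwa]
      intro he
      apply hc
      rw [he, hT]
      refine Finset.mem_image_of_mem f ?_
      rw [Set.mem_toFinset]
      exact hadj'
    · have hua' : u ≠ a := fun h => ha (h ▸ hu')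
      have hadj' : G.Adj a u := by rw [hwa] at hadj; exact hadj.symm
      rw [hwa, Function.update_self, Function.update_of_ne hua']
      intro he
      apply hc
      rw [← he, hT]
      refine Finset.mem_image_of_mem f ?_
      rw [Set.mem_toFinset]
      exact hadj'
    · have hua' : u ≠ a := fun h => ha (h ▸ hu')
      have hwa : w ≠ a := fun h => ha (h ▸ hw')
      rw [Function.update_of_ne hua', Function.update_of_ne hwa]
      exact hf u hu' w hw' hadj

private lemma starfree_indep {V : Type*} (G : SimpleGraph V) (k : ℕ)
    (hG : IsInducedSubgraphFree (completeBipartiteGraph (Fin 1) (Fin k)) G) (v : V) :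
    (Gᶜ.induce (G.neighborSet v)).CliqueFree k := by
  classical
  intro t ht
  let e : ↥t ≃ Fin k := t.equivFinOfCardEq ht.card_eq
  let w : Fin k → V := fun i => (((e.symm i : ↥t) : ↥(G.neighborSet v)) : V)
  have hwadj : ∀ i, G.Adj v (w i) := fun i => ((e.symm i : ↥t) : ↥(G.neighborSet v)).2
  have hwinj : Function.Injective w := by
    intro i j hij
    have : (e.symm i : ↥t) = (e.symm j : ↥t) := by
      apply Subtype.ext; apply Subtype.ext; exact hij
    exact e.symm.injective this
  have hwne : ∀ i, v ≠ w i := fun i h => G.irrefl (h ▸ hwadj i)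
  have hwnadj : ∀ i j, i ≠ j → ¬ G.Adj (w i) (w j) := by
    intro i j hij hadj
    have hne : ((e.symm i : ↥t) : ↥(G.neighborSet v)) ≠ ((e.symm j : ↥t) : ↥(G.neighborSet v)) :=
      fun h => hij (hwinj (congrArg Subtype.val h))
    have := ht.isClique (e.symm i).2 (e.symm j).2 hne
    exact this.2 hadj
  let f : Fin 1 ⊕ Fin k → V := Sum.elim (fun _ => v) w
  have hfinj : Function.Injective f := by
    rintro (i | i) (j | j) hij
    · congr; exact Subsingleton.elim i j
    · exact absurd hij (hwne j)
    · exact absurd hij.symm (hwne i)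
    · exact congrArg Sum.inr (hwinj hij)
  apply hG
  refine ⟨Set.range f, ⟨⟨Equiv.ofInjective f hfinj, ?_⟩⟩⟩
  rintro (i | i) (j | j)
  · simp only [comap_adj, Function.Embedding.coe_subtype, Equiv.ofInjective_apply]
    simp [f, completeBipartiteGraph]
  · simp only [comap_adj, Function.Embedding.coe_subtype, Equiv.ofInjective_apply]
    simp only [f, Sum.elim_inl, Sum.elim_inr]
    simp only [completeBipartiteGraph]
    simp only [Sum.isLeft_inl, Sum.isRight_inr, true_and, and_true, Sum.isRight_inl,
      Sum.isLeft_inr, false_and, and_false, or_false, false_or, iff_true]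
    simp [hwadj j]
  · simp only [comap_adj, Function.Embedding.coe_subtype, Equiv.ofInjective_apply]
    simp only [f, Sum.elim_inl, Sum.elim_inr]
    simp only [completeBipartiteGraph]
    simp only [Sum.isLeft_inl, Sum.isRight_inr, true_and, and_true, Sum.isRight_inl,
      Sum.isLeft_inr, false_and, and_false, or_false, false_or, iff_true]
    simp [(hwadj i).symm]
  · simp only [comap_adj, Function.Embedding.coe_subtype, Equiv.ofInjective_apply]
    simp only [f, Sum.elim_inr]
    simp only [completeBipartiteGraph]
    by_cases hij : i = j
    · subst hij; simp
    · simp [hwnadj i j hij]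

theorem stmt_6 {V : Type*} [Fintype V] [Nonempty V] (G : SimpleGraph V) (k : ℕ) (hk : 1 ≤ k)
    (hG : IsInducedSubgraphFree (completeBipartiteGraph (Fin 1) (Fin k)) G) :
    G.chromaticNumber ≤ (G.cliqueNum ^ k : ℕ) := by
  classical
  set ω := G.cliqueNum with hωdef
  have hω1 : 1 ≤ ω := by
    obtain ⟨v⟩ := ‹Nonempty V›
    have hcl : G.IsClique ({v} : Finset V) := by
      rw [Finset.coe_singleton]
      exact Set.pairwise_singleton v G.Adj
    have := hcl.card_le_cliqueNum
    simpa using this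
  have hcf : G.CliqueFree (ω + 1) := by
    intro t ht
    have := ht.isClique.card_le_cliqueNum
    rw [ht.card_eq] at this
    omega
  have hdeg : ∀ v, Nat.card (G.neighborSet v) < ω ^ k := by
    intro v
    have h1 : (G.induce (G.neighborSet v)).CliqueFree ((ω - 1) + 1) := by
      have := neighborhood_cliqueFree G v ω hcf
      rwa [Nat.sub_add_cancel hω1]
    have h2 : (G.induce (G.neighborSet v))ᶜ.CliqueFree ((k - 1) + 1) := by
      rw [compl_induce, Nat.sub_add_cancel hk]
      exact starfree_indep G k hG v
    have hr := ramsey_bound (ω - 1) (k - 1) (G.induce (G.neighborSet v)) h1 h2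
    have hsymm : ((ω - 1) + (k - 1)).choose (ω - 1) = ((ω - 1) + (k - 1)).choose (k - 1) := by
      rw [← Nat.choose_symm (by omega : k - 1 ≤ (ω - 1) + (k - 1))]
      congr 1
      omega
    have hb : ((ω - 1) + (k - 1)).choose (k - 1) ≤ ω ^ (k - 1) := by
      have := choose_le_pow_aux (k - 1) (ω - 1)
      rwa [Nat.sub_add_cancel hω1] at this
    have hpow : ω ^ (k - 1) ≤ ω ^ k := Nat.pow_le_pow_right hω1 (by omega)
    calc Nat.card ↥(G.neighborSet v) < ((ω - 1) + (k - 1)).choose (ω - 1) := hr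
      _ = ((ω - 1) + (k - 1)).choose (k - 1) := hsymm
      _ ≤ ω ^ (k - 1) := hb
      _ ≤ ω ^ k := hpow
  have hcol : G.Colorable (ω ^ k) :=
    greedy_colorable G (ω ^ k) (Nat.pow_pos hω1) hdeg
  exact hcol.chromaticNumber_le
end
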